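/- Greedy pruning maximizes the product (core of the Greedy Pruning optimality theorem): let D ≥ 1, let N : Fin D → ℕ with N d ≥ 1 for all d, and let B be a natural number with B ≤ Σ_d (N d − 1). Consider any sequence z^0 = N, z^1, …, z^B where each z^{t+1} is obtained from z^t by decrementing by one a coordinate d_t achieving the maximum value of z^t (i.e., z^t_{d_t} ≥ z^t_{d'} for all d'). Then for every x : Fin D → ℕ with x d ≤ N d − 1 for all d and Σ_d x d = B, one has Π_d (N d − x d) ≤ Π_d z^B_d; that is, greedily decrementing a currently largest coordinate maximizes the remaining product over all ways of distributing B decrements. -/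
import Mathlib

open Finset

lemma greedy_step_aux
    {D : ℕ} (zc zn : Fin D → ℕ) (dt : Fin D)
    (hmax : ∀ d', zc d' ≤ zc dt)
    (h1 : zn dt = zc dt - 1)
    (h2 : ∀ d', d' ≠ dt → zn d' = zc d')
    (x : Fin D → ℕ) (hx : ∀ d, x d ≤ zc d - 1)
    (hs : 0 < ∑ d, x d) :
    ∃ x' : Fin D → ℕ, (∀ d, x' d ≤ zn d - 1) ∧ (∑ d, x' d) + 1 = ∑ d, x d ∧
      ∏ d, (zc d - x d) ≤ ∏ d, (zn d - x' d) := by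
  by_cases hdt : 1 ≤ x dt
  · refine ⟨Function.update x dt (x dt - 1), ?_, ?_, ?_⟩
    · intro d
      by_cases hd : d = dt
      · subst hd
        simp only [Function.update_self, h1]
        have := hx d; omega
      · rw [Function.update_of_ne hd, h2 d hd]
        exact hx d
    · rw [Finset.sum_update_of_mem (mem_univ dt), Finset.sdiff_singleton_eq_erase,
        ← Finset.add_sum_erase _ x (mem_univ dt)]
      omega
    · apply le_of_eq
      apply Finset.prod_congr rfl
      intro d _
      by_cases hd : d = dt
      · subst hd
        simp only [Function.update_self, h1]
        have := hx d; omega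
      · rw [Function.update_of_ne hd, h2 d hd]
  · -- x dt = 0
    push_neg at hdt
    have hxdt : x dt = 0 := by omega
    obtain ⟨d', _, hd'⟩ := Finset.exists_ne_zero_of_sum_ne_zero (by omega : ∑ d, x d ≠ 0)
    have hne : d' ≠ dt := by intro h; rw [h, hxdt] at hd'; exact hd' rfl
    refine ⟨Function.update x d' (x d' - 1), ?_, ?_, ?_⟩
    · intro d
      by_cases hd : d = d'
      · subst hd
        rw [Function.update_self, h2 d hne]
        have := hx d; omega
      · rw [Function.update_of_ne hd]
        by_cases hdd : d = dt
        · subst hdd; rw [hxdt]; omega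
        · rw [h2 d hdd]; exact hx d
    · rw [Finset.sum_update_of_mem (mem_univ d'), Finset.sdiff_singleton_eq_erase,
        ← Finset.add_sum_erase _ x (mem_univ d')]
      omega
    · -- product inequality: only coordinates dt and d' change
      set f : Fin D → ℕ := fun d => zc d - x d with hf
      set g : Fin D → ℕ := fun d => zn d - Function.update x d' (x d' - 1) d with hg
      have hrest : ∀ d ∈ (univ.erase dt).erase d', f d = g d := by
        intro d hd
        simp only [mem_erase] at hd
        simp only [hf, hg, Function.update_of_ne hd.1, h2 d hd.2.1]
      have hsplit : ∀ h : Fin D → ℕ, ∏ d, h d = h dt * (h d' * ∏ d ∈ (univ.erase dt).erase d', h d) := by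
        intro h
        rw [← Finset.mul_prod_erase univ h (mem_univ dt),
            ← Finset.mul_prod_erase (univ.erase dt) h (mem_erase.2 ⟨hne, mem_univ d'⟩)]
      rw [hsplit f, hsplit g, Finset.prod_congr rfl hrest, ← mul_assoc, ← mul_assoc]
      apply Nat.mul_le_mul_right
      -- f dt * f d' ≤ g dt * g d'
      have e1 : f dt = zc dt := by simp [hf, hxdt]
      have e2 : g dt = zc dt - 1 := by
        simp only [hg]
        rw [Function.update_of_ne (Ne.symm hne), hxdt, h1]
        omega
      have e3 : f d' = zc d' - x d' := rfl
      have e4 : g d' = zc d' - x d' + 1 := by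
        show zn d' - Function.update x d' (x d' - 1) d' = _
        rw [Function.update_self, h2 d' hne]
        have := hx d'; omega
      rw [e1, e2, e3, e4]
      have hb : zc d' - x d' + 1 ≤ zc dt := by
        have := hx d'; have := hmax d'; omega
      obtain ⟨c, hc⟩ : ∃ c, zc dt = (zc d' - x d') + 1 + c := ⟨_, (Nat.add_sub_cancel' hb).symm⟩
      have hc2 : zc d' - x d' + 1 + c - 1 = zc d' - x d' + c := by omega
      rw [hc, hc2]
      nlinarith [Nat.zero_le c, Nat.zero_le (zc d' - x d')]


/-- Greedy pruning maximizes the product: let `D ≥ 1`,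
`N : Fin D → ℕ` with `N d ≥ 1`, and `B ≤ Σ_d (N d − 1)`.  Let `z 0 = N` and let each
`z (t+1)` (for `t < B`) be obtained from `z t` by decrementing a coordinate of
currently maximal value.  Then for every distribution `x` of the `B` decrements
(`x d ≤ N d − 1`, `Σ_d x d = B`), the remaining product satisfies
`Π_d (N d − x d) ≤ Π_d z B d`. -/
theorem greedy_pruning_maximizes_product
    (D : ℕ) (hD : 1 ≤ D) (N : Fin D → ℕ) (hN : ∀ d, 1 ≤ N d)
    (B : ℕ) (hB : B ≤ ∑ d, (N d - 1))
    (z : ℕ → Fin D → ℕ) (hz0 : z 0 = N)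
    (hstep : ∀ t < B, ∃ dt : Fin D,
      (∀ d', z t d' ≤ z t dt) ∧
      z (t + 1) dt = z t dt - 1 ∧
      ∀ d', d' ≠ dt → z (t + 1) d' = z t d')
    (x : Fin D → ℕ) (hx : ∀ d, x d ≤ N d - 1) (hxsum : ∑ d, x d = B) :
    ∏ d, (N d - x d) ≤ ∏ d, z B d := by
  have key : ∀ k, k ≤ B → ∀ y : Fin D → ℕ,
      (∀ d, y d ≤ z (B - k) d - 1) → (∑ d, y d = k) →
      ∏ d, (z (B - k) d - y d) ≤ ∏ d, z B d := by
    intro k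
    induction k with
    | zero =>
      intro _ y _ hys
      have hy0 : ∀ d, y d = 0 := by
        intro d
        have := Finset.sum_eq_zero_iff.mp hys d (Finset.mem_univ d)
        exact this
      simp only [Nat.sub_zero]
      apply le_of_eq
      apply Finset.prod_congr rfl
      intro d _
      rw [hy0 d, Nat.sub_zero]
    | succ k ih =>
      intro hk y hy hys
      have ht : B - (k + 1) < B := by omega
      obtain ⟨dt, hmax, h1, h2⟩ := hstep (B - (k + 1)) ht
      have ht1 : B - (k + 1) + 1 = B - k := by omega
      obtain ⟨y', hy'le, hy'sum, hy'prod⟩ :=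
        greedy_step_aux (z (B - (k + 1))) (z (B - (k + 1) + 1)) dt hmax h1 h2 y hy
          (by omega)
      calc ∏ d, (z (B - (k + 1)) d - y d)
          ≤ ∏ d, (z (B - (k + 1) + 1) d - y' d) := hy'prod
        _ ≤ ∏ d, z B d := by
            rw [ht1] at *
            exact ih (by omega) y' hy'le (by omega)
  have h0 : B - B = 0 := by omega
  have := key B le_rfl x (by rw [h0, hz0]; exact hx) hxsum
  rw [h0, hz0] at this
  exact this
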